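/- If F is a forest (a finite acyclic graph), then the independence complex I(F) is either contractible or homotopy equivalent to a sphere. In particular, the total dimension of the reduced cohomology of I(F) over ℚ is at most 1. -/

import Mathlib

open Finset

/-- An abstract simplicial complex on vertex type `V`, given by its set of faces
(downward closed). -/
structure SCpx (V : Type*) where
  faces : Set (Finset V)
  down : ∀ s t : Finset V, s ⊆ t → t ∈ faces → s ∈ faces

variable {V : Type*} [Fintype V] [DecidableEq V]

/-- The independence complex of a graph: faces are the independent sets. -/
def indepCpx (G : SimpleGraph V) : SCpx V where
  faces := {s | ∀ u ∈ s, ∀ v ∈ s, ¬ G.Adj u v}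
  down := fun s t hst ht u hu v hv => ht u (hst hu) v (hst hv)

/-- An enumeration of the vertices, used to fix orientation signs. -/
noncomputable def ordV (v : V) : ℕ := ((Fintype.equivFin V) v : ℕ)

/-- Reduced simplicial cochains: `cochain K d` is spanned by the faces of
cardinality `d` (so `d = 0` corresponds to the empty face, sitting in
reduced degree `-1`). -/
abbrev cochain (K : SCpx V) (d : ℕ) : Type _ :=
  {s : Finset V // s ∈ K.faces ∧ s.card = d} → ℚ

/-- The simplicial coboundary map on reduced cochains. -/
noncomputable def delta (K : SCpx V) (d : ℕ) : cochain K d →ₗ[ℚ] cochain K (d + 1) where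
  toFun f t := ∑ v ∈ t.1.attach,
    (-1 : ℚ) ^ ((t.1.filter fun w => ordV w < ordV v.1).card) *
      f ⟨t.1.erase v.1, K.down _ _ (Finset.erase_subset _ _) t.2.1, by
        simp [Finset.card_erase_of_mem v.2, t.2.2]⟩
  map_add' f g := by
    funext t
    simp only [Pi.add_apply, mul_add, Finset.sum_add_distrib]
  map_smul' c f := by
    funext t
    simp only [Pi.smul_apply, smul_eq_mul, RingHom.id_apply, Finset.mul_sum]
    exact Finset.sum_congr rfl fun v _ => by ring

/-- The range of the previous coboundary (interpreted as `⊥` in lowest degree). -/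
noncomputable def prevRange (K : SCpx V) : (d : ℕ) → Submodule ℚ (cochain K d)
  | 0 => ⊥
  | (d + 1) => LinearMap.range (delta K d)

/-- Reduced simplicial cohomology over `ℚ` in shifted indexing:
`Hq K d` is `H̃^{d-1}(K; ℚ)`. -/
abbrev Hq (K : SCpx V) (d : ℕ) :=
  ↥(LinearMap.ker (delta K d)) ⧸
    (prevRange K d).comap (LinearMap.ker (delta K d)).subtype

/-- `reducedBetti K r = dim_ℚ H̃^r(K; ℚ)`. -/
noncomputable def reducedBetti (K : SCpx V) (r : ℤ) : ℕ :=
  if r < -1 then 0 else Module.finrank ℚ (Hq K (r + 1).toNat)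

set_option maxHeartbeats 1000000
set_option synthInstance.maxHeartbeats 400000

-- ===== new stuff =====

lemma ordV_inj : Function.Injective (ordV (V := V)) := fun a b h =>
  (Fintype.equivFin V).injective (Fin.ext h)

open scoped Classical in
noncomputable def extc {K : SCpx V} {d : ℕ} (f : cochain K d) : Finset V → ℚ :=
  fun s => if h : s ∈ K.faces ∧ s.card = d then f ⟨s, h⟩ else 0

lemma extc_apply {K : SCpx V} {d : ℕ} (f : cochain K d) (s : Finset V)
    (h : s ∈ K.faces ∧ s.card = d) : extc f s = f ⟨s, h⟩ := by
  unfold extc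
  split
  · rfl
  · exact absurd h ‹_›

lemma extc_zero {K : SCpx V} {d : ℕ} (f : cochain K d) (s : Finset V)
    (h : ¬ (s ∈ K.faces ∧ s.card = d)) : extc f s = 0 := by
  unfold extc
  split
  · exact absurd ‹_› h
  · rfl

noncomputable def sgn (s : Finset V) (x : V) : ℚ :=
  (-1) ^ ((s.filter fun w => ordV w < ordV x).card)

lemma sgn_ne_zero (s : Finset V) (x : V) : sgn s x ≠ 0 := by
  simp [sgn, pow_ne_zero]

lemma delta_apply (K : SCpx V) (d : ℕ) (f : cochain K d)
    (t : {s : Finset V // s ∈ K.faces ∧ s.card = d + 1}) :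
    delta K d f t = ∑ x ∈ t.1, sgn t.1 x * extc f (t.1.erase x) := by
  rw [← Finset.sum_attach t.1 (fun x => sgn t.1 x * extc f (t.1.erase x))]
  refine Finset.sum_congr rfl fun v _ => ?_
  rw [extc_apply f (t.1.erase v.1) ⟨K.down _ _ (Finset.erase_subset _ _) t.2.1, by
    simp [Finset.card_erase_of_mem v.2, t.2.2]⟩]
  rfl

lemma sgn_erase_lt (t : Finset V) (x y : V) (hx : x ∈ t) (h : ordV x < ordV y) :
    sgn t x * sgn (t.erase x) y = - (sgn t y * sgn (t.erase y) x) := by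
  classical
  have h1 : (t.erase x).filter (fun w => ordV w < ordV y)
      = (t.filter (fun w => ordV w < ordV y)).erase x := Finset.filter_erase (p := fun w => ordV w < ordV y) x t
  have h2 : (t.erase y).filter (fun w => ordV w < ordV x)
      = (t.filter (fun w => ordV w < ordV x)).erase y := Finset.filter_erase (p := fun w => ordV w < ordV x) y t
  have hxmem : x ∈ t.filter (fun w => ordV w < ordV y) := Finset.mem_filter.2 ⟨hx, h⟩
  have hynmem : y ∉ t.filter (fun w => ordV w < ordV x) := by
    simp only [Finset.mem_filter, not_and]
    intro _ hy
    exact absurd (hy.trans h) (lt_irrefl _)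
  have hbpos : 0 < (t.filter (fun w => ordV w < ordV y)).card := Finset.card_pos.2 ⟨x, hxmem⟩
  obtain ⟨k, hk⟩ : ∃ k, (t.filter (fun w => ordV w < ordV y)).card = k + 1 :=
    ⟨_ - 1, (Nat.succ_pred_eq_of_pos hbpos).symm⟩
  have e1 : ((t.erase x).filter (fun w => ordV w < ordV y)).card = k := by
    rw [h1, Finset.card_erase_of_mem hxmem, hk, Nat.add_sub_cancel]
  have e2 : ((t.erase y).filter (fun w => ordV w < ordV x)).card
      = (t.filter (fun w => ordV w < ordV x)).card := by
    rw [h2, Finset.erase_eq_of_notMem hynmem]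
  simp only [sgn, e1, e2, hk, pow_succ]
  ring

lemma sgn_erase (t : Finset V) (x y : V) (hx : x ∈ t) (hy : y ∈ t) (hxy : x ≠ y) :
    sgn t x * sgn (t.erase x) y = - (sgn t y * sgn (t.erase y) x) := by
  rcases lt_trichotomy (ordV x) (ordV y) with h | h | h
  · exact sgn_erase_lt t x y hx h
  · exact absurd (ordV_inj h) hxy
  · rw [sgn_erase_lt t y x hy h]; ring

lemma delta_delta (K : SCpx V) (d : ℕ) (f : cochain K d) :
    delta K (d + 1) (delta K d f) = 0 := by
  funext t
  rw [delta_apply]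
  have h1 : ∀ x ∈ t.1, sgn t.1 x * extc (delta K d f) (t.1.erase x)
      = ∑ y ∈ t.1.erase x, sgn t.1 x * (sgn (t.1.erase x) y * extc f ((t.1.erase x).erase y)) := by
    intro x hx
    rw [extc_apply (delta K d f) (t.1.erase x) ⟨K.down _ _ (Finset.erase_subset _ _) t.2.1, by
      simp [Finset.card_erase_of_mem hx, t.2.2]⟩, delta_apply, Finset.mul_sum]
  rw [Finset.sum_congr rfl h1, Finset.sum_sigma']
  show ∑ p ∈ t.1.sigma (fun x => t.1.erase x),
      (fun p : (_ : V) × V => sgn t.1 p.1 * (sgn (t.1.erase p.1) p.2 * extc f ((t.1.erase p.1).erase p.2))) p = (0 : (fun _ => ℚ) t)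
  refine Finset.sum_involution (fun p _ => ⟨p.2, p.1⟩) ?_ ?_ ?_ ?_
  · intro p hp
    simp only [Finset.mem_sigma] at hp
    obtain ⟨h1', h2'⟩ := hp
    have hne : p.2 ≠ p.1 := Finset.ne_of_mem_erase h2'
    have h2t : p.2 ∈ t.1 := Finset.mem_of_mem_erase h2'
    have key := sgn_erase t.1 p.1 p.2 h1' h2t (Ne.symm hne)
    have ecomm : (t.1.erase p.1).erase p.2 = (t.1.erase p.2).erase p.1 :=
      Finset.erase_right_comm
    rw [ecomm, ← mul_assoc, key, ← mul_assoc]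
    ring
  · intro p hp _
    simp only [Finset.mem_sigma] at hp
    have hne : p.2 ≠ p.1 := Finset.ne_of_mem_erase hp.2
    intro hcon
    have : p.2 = p.1 := by
      have := congrArg Sigma.fst hcon
      simpa using this
    exact hne this
  · intro p hp
    simp only [Finset.mem_sigma] at hp ⊢
    exact ⟨Finset.mem_of_mem_erase hp.2,
      Finset.mem_erase.2 ⟨fun h => absurd h.symm (Finset.ne_of_mem_erase hp.2), hp.1⟩⟩
  · intro p hp; rfl


-- ===== dimension counting =====

open scoped Classical

noncomputable def facesD (K : SCpx V) (d : ℕ) : Finset (Finset V) :=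
  univ.filter (fun s => s ∈ K.faces ∧ s.card = d)

noncomputable def allF (K : SCpx V) : Finset (Finset V) :=
  univ.filter (fun s => s ∈ K.faces)

noncomputable instance (K : SCpx V) (d : ℕ) :
    Fintype {s : Finset V // s ∈ K.faces ∧ s.card = d} := Subtype.fintype _

instance (K : SCpx V) (d : ℕ) : FiniteDimensional ℚ (cochain K d) := by
  infer_instance

lemma finrank_cochain (K : SCpx V) (d : ℕ) :
    Module.finrank ℚ (cochain K d) = (facesD K d).card := by
  rw [Module.finrank_fintype_fun_eq_card, Fintype.card_subtype]
  rfl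

lemma prevRange_le (K : SCpx V) (d : ℕ) :
    prevRange K (d + 1) ≤ LinearMap.ker (delta K (d + 1)) := by
  rintro x hx
  obtain ⟨y, rfl⟩ := hx
  exact LinearMap.mem_ker.2 (delta_delta K d y)

lemma Hq_plus (K : SCpx V) (d : ℕ) :
    Module.finrank ℚ (Hq K (d + 1)) + Module.finrank ℚ (LinearMap.range (delta K d))
      = Module.finrank ℚ (LinearMap.ker (delta K (d + 1))) := by
  have h := Submodule.finrank_quotient_add_finrank
    (R := ℚ) (M := ↥(LinearMap.ker (delta K (d + 1))))
    ((prevRange K (d + 1)).comap (LinearMap.ker (delta K (d + 1))).subtype)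
  have h2 : Module.finrank ℚ
      ((prevRange K (d + 1)).comap (LinearMap.ker (delta K (d + 1))).subtype)
      = Module.finrank ℚ (LinearMap.range (delta K d)) := by
    have e := Submodule.comapSubtypeEquivOfLe (prevRange_le K d)
    have h3 : Module.finrank ℚ
        ((prevRange K (d + 1)).comap (LinearMap.ker (delta K (d + 1))).subtype)
        = Module.finrank ℚ (prevRange K (d + 1)) := e.finrank_eq
    rw [h3]
    rfl
  rw [h2] at h
  have hb : Module.finrank ℚ (Hq K (d + 1)) = Module.finrank ℚ
      (↥(LinearMap.ker (delta K (d + 1))) ⧸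
        (prevRange K (d + 1)).comap (LinearMap.ker (delta K (d + 1))).subtype) := rfl
  omega

lemma Hq_zero (K : SCpx V) :
    Module.finrank ℚ (Hq K 0) = Module.finrank ℚ (LinearMap.ker (delta K 0)) := by
  have h := Submodule.finrank_quotient_add_finrank
    (R := ℚ) (M := ↥(LinearMap.ker (delta K 0)))
    ((prevRange K 0).comap (LinearMap.ker (delta K 0)).subtype)
  have h2 : (prevRange K 0).comap (LinearMap.ker (delta K 0)).subtype = ⊥ := by
    show ((⊥ : Submodule ℚ (cochain K 0))).comap _ = ⊥
    rw [Submodule.comap_bot, LinearMap.ker_eq_bot']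
    intro x hx
    exact Subtype.ext hx
  have h3 : Module.finrank ℚ
      ((prevRange K 0).comap (LinearMap.ker (delta K 0)).subtype) = 0 := by
    rw [h2]
    exact finrank_bot ℚ _
  have hb : Module.finrank ℚ (Hq K 0) = Module.finrank ℚ
      (↥(LinearMap.ker (delta K 0)) ⧸
        (prevRange K 0).comap (LinearMap.ker (delta K 0)).subtype) := rfl
  omega

lemma hq_vanish (K : SCpx V) (d : ℕ) (hd : Fintype.card V < d) :
    Module.finrank ℚ (Hq K d) = 0 := by
  haveI : IsEmpty {s : Finset V // s ∈ K.faces ∧ s.card = d} := by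
    refine ⟨fun x => ?_⟩
    have h1 : x.1.card = d := x.2.2
    have h2 : x.1.card ≤ Fintype.card V := by
      simpa using Finset.card_le_univ x.1
    omega
  haveI : Subsingleton (cochain K d) :=
    ⟨fun f g => funext fun x => (IsEmpty.false x).elim⟩
  haveI : Subsingleton (LinearMap.ker (delta K d)) := by infer_instance
  haveI : Subsingleton (Hq K d) := Quotient.instSubsingletonQuotient _
  exact Module.finrank_zero_of_subsingleton

lemma sum_faces_card (K : SCpx V) :
    ∑ d ∈ range (Fintype.card V + 2), (facesD K d).card = (allF K).card := by
  rw [Finset.card_eq_sum_card_fiberwise (f := fun s : Finset V => s.card)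
    (t := range (Fintype.card V + 2)) (fun x _ => by
      simp only [Finset.mem_coe, Finset.mem_range]
      have := Finset.card_le_univ x
      omega)]
  refine Finset.sum_congr rfl fun d _ => ?_
  congr 1
  simp only [allF, facesD, Finset.filter_filter]

lemma total_bound (K : SCpx V) (l : ℕ → ℕ)
    (hl : ∀ d, l d ≤ Module.finrank ℚ (LinearMap.range (delta K d))) :
    (∑ d ∈ range (Fintype.card V + 2), Module.finrank ℚ (Hq K d)) +
      2 * ∑ d ∈ range (Fintype.card V + 1), l d ≤ (allF K).card := by
  set N := Fintype.card V with hN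
  set hq : ℕ → ℕ := fun d => Module.finrank ℚ (Hq K d) with hhq
  set rk : ℕ → ℕ := fun d => Module.finrank ℚ (LinearMap.range (delta K d)) with hrk
  set kk : ℕ → ℕ := fun d => Module.finrank ℚ (LinearMap.ker (delta K d)) with hkk
  have key : (∑ d ∈ range (N + 2), hq d) + (∑ d ∈ range (N + 1), rk d)
      = ∑ d ∈ range (N + 2), kk d := by
    rw [Finset.sum_range_succ' hq (N + 1), Finset.sum_range_succ' kk (N + 1)]
    have h0 : hq 0 = kk 0 := Hq_zero K
    have : (∑ d ∈ range (N + 1), hq (d + 1)) + (∑ d ∈ range (N + 1), rk d)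
        = ∑ d ∈ range (N + 1), kk (d + 1) := by
      rw [← Finset.sum_add_distrib]
      exact Finset.sum_congr rfl fun d _ => Hq_plus K d
    omega
  have key2 : ∑ d ∈ range (N + 2), (rk d + kk d) = (allF K).card := by
    rw [← sum_faces_card K]
    exact Finset.sum_congr rfl fun d _ => by
      rw [← finrank_cochain]
      exact LinearMap.finrank_range_add_finrank_ker _
  rw [Finset.sum_add_distrib] at key2
  have b1 : ∑ d ∈ range (N + 1), l d ≤ ∑ d ∈ range (N + 1), rk d :=
    Finset.sum_le_sum fun d _ => hl d
  have b2 : ∑ d ∈ range (N + 1), rk d ≤ ∑ d ∈ range (N + 2), rk d :=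
    Finset.sum_le_sum_of_subset (by intro x; simp only [Finset.mem_range]; omega)
  have e1 : Finset.sum (range (N + 2)) hq = ∑ d ∈ range (N + 2), hq d := rfl
  have e2 : Finset.sum (range (N + 1)) l = ∑ d ∈ range (N + 1), l d := rfl
  have e3 : Finset.sum (range (N + 2)) rk = ∑ d ∈ range (N + 2), rk d := rfl
  have e4 : Finset.sum (range (N + 1)) rk = ∑ d ∈ range (N + 1), rk d := rfl
  have e5 : Finset.sum (range (N + 2)) kk = ∑ d ∈ range (N + 2), kk d := rfl
  omega

-- ===== matching =====

section Matching

variable (F : SimpleGraph V) (m : ℕ) (u v : ℕ → V)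

lemma mem_indepCpx (s : Finset V) :
    s ∈ (indepCpx F).faces ↔ ∀ a ∈ s, ∀ b ∈ s, ¬ F.Adj a b := Iff.rfl

noncomputable def lev (σ : Finset V) : ℕ :=
  Nat.find (show ∃ i, i = m ∨ u i ∉ σ from ⟨m, Or.inl rfl⟩)

lemma lev_le (σ : Finset V) : lev m u σ ≤ m :=
  Nat.find_min' _ (Or.inl rfl)

lemma u_mem_of_lt_lev (σ : Finset V) {l : ℕ} (hl : l < lev m u σ) : u l ∈ σ := by
  unfold lev at hl
  have := Nat.find_min (show ∃ i, i = m ∨ u i ∉ σ from ⟨m, Or.inl rfl⟩) hl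
  push_neg at this
  exact this.2

lemma u_not_mem_lev (σ : Finset V) (h : lev m u σ < m) : u (lev m u σ) ∉ σ := by
  unfold lev at h ⊢
  have := Nat.find_spec (show ∃ i, i = m ∨ u i ∉ σ from ⟨m, Or.inl rfl⟩)
  rcases this with h' | h'
  · omega
  · exact h'

lemma lev_eq (σ : Finset V) (i : ℕ) (him : i ≤ m) (hmem : ∀ l < i, u l ∈ σ)
    (hnot : i < m → u i ∉ σ) : lev m u σ = i := by
  have hle := lev_le m u σ
  unfold lev at hle ⊢
  refine le_antisymm ?_ ?_
  · rcases Nat.lt_or_ge i m with h | h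
    · exact Nat.find_min' _ (Or.inr (hnot h))
    · have : i = m := le_antisymm him h
      omega
  · by_contra hc
    push_neg at hc
    have := Nat.find_spec (show ∃ j, j = m ∨ u j ∉ σ from ⟨m, Or.inl rfl⟩)
    rcases this with h' | h'
    · omega
    · exact h' (hmem _ hc)

def IsLo (σ : Finset V) : Prop :=
  σ ∈ (indepCpx F).faces ∧ lev m u σ < m ∧ v (lev m u σ) ∉ σ

variable {F m u v}

section WithHyp

variable (h1 : ∀ i < m, ∀ w, F.Adj (v i) w → w = u i ∨ ∃ l < i, (w = u l ∨ F.Adj (u l) w))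
variable (h2 : ∀ i < m, ∀ l < i, ¬F.Adj (v i) (u l) ∧ v i ≠ u l ∧ u i ≠ u l)
variable (h5 : ∀ i < m, v i = u i → i + 1 = m)

include h1 h2 in
lemma insert_face (σ : Finset V) (hσ : IsLo F m u v σ) :
    insert (v (lev m u σ)) σ ∈ (indepCpx F).faces := by
  obtain ⟨hface, hlt, hv⟩ := hσ
  set i := lev m u σ with hi
  have core : ∀ b ∈ σ, ¬ F.Adj (v i) b := by
    intro b hb hadj
    rcases h1 i hlt b hadj with hb' | ⟨l, hl, hb'⟩
    · exact u_not_mem_lev m u σ hlt (hb' ▸ hb)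
    · rcases hb' with hb' | hb'
      · exact (h2 i hlt l hl).1 (hb' ▸ hadj)
      · exact hface (u l) (u_mem_of_lt_lev m u σ hl) b hb hb'
  intro a ha b hb
  rcases Finset.mem_insert.1 ha with rfl | ha' <;>
    rcases Finset.mem_insert.1 hb with rfl | hb'
  · exact fun h => F.irrefl h
  · exact core b hb'
  · exact fun h => core a ha' h.symm
  · exact hface a ha' b hb'

omit h1 in
include h2 h5 in
lemma erase_insert_not_lo (σ : Finset V) (hlt : lev m u σ < m) (hvnot : v (lev m u σ) ∉ σ)
    (b : V) (hb : b ∈ σ) :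
    ¬ IsLo F m u v ((insert (v (lev m u σ)) σ).erase b) ∨
      lev m u ((insert (v (lev m u σ)) σ).erase b) < lev m u σ := by
  classical
  set i := lev m u σ with hidef
  set c := insert (v i) σ with hcdef
  set ρ := c.erase b with hρdef
  have hbne : b ≠ v i := fun h => hvnot (h ▸ hb)
  by_cases hB : ∃ l, l < i ∧ b = u l
  · right
    obtain ⟨l, hl, rfl⟩ := hB
    have hlm : l < m := lt_trans hl hlt
    have hlev : lev m u ρ = l := by
      refine lev_eq m u ρ l (le_of_lt hlm) ?_ ?_
      · intro l' hl'
        refine Finset.mem_erase.2 ⟨?_, Finset.mem_insert_of_mem (u_mem_of_lt_lev m u σ (by omega))⟩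
        exact fun h => (h2 l hlm l' hl').2.2 h.symm
      · intro _
        exact Finset.notMem_erase _ _
    omega
  · left
    intro hIsLo
    push_neg at hB
    have hSi : ∀ l < i, u l ∈ ρ := by
      intro l hl
      refine Finset.mem_erase.2 ⟨fun h => hB l hl h.symm, Finset.mem_insert_of_mem (u_mem_of_lt_lev m u σ hl)⟩
    by_cases hvu : v i = u i
    · have hm : i + 1 = m := h5 i hlt hvu
      have hlev : lev m u ρ = m := by
        refine lev_eq m u ρ m le_rfl ?_ (fun h => absurd h (lt_irrefl m))
        intro l hl
        rcases Nat.lt_or_ge l i with h | h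
        · exact hSi l h
        · have : l = i := by omega
          subst this
          refine Finset.mem_erase.2 ⟨fun h => hbne (by rw [hvu, h]), ?_⟩
          rw [← hvu]
          exact Finset.mem_insert_self _ _
      have := hIsLo.2.1
      omega
    · have hlev : lev m u ρ = i := by
        refine lev_eq m u ρ i (le_of_lt hlt) hSi ?_
        intro _
        intro hmem
        have : u i ∈ c := Finset.mem_of_mem_erase hmem
        rcases Finset.mem_insert.1 this with h | h
        · exact hvu h.symm
        · exact u_not_mem_lev m u σ hlt h
      have hvρ : v i ∈ ρ := Finset.mem_erase.2 ⟨fun h => hbne h.symm, Finset.mem_insert_self _ _⟩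
      have := hIsLo.2.2
      rw [hlev] at this
      exact this hvρ

end WithHyp

noncomputable def loD (F : SimpleGraph V) (m : ℕ) (u v : ℕ → V) (d : ℕ) : Finset (Finset V) :=
  (facesD (indepCpx F) d).filter (IsLo F m u v)

lemma mem_loD_iff {F : SimpleGraph V} {m : ℕ} {u v : ℕ → V} {d : ℕ} (s : Finset V) :
    s ∈ loD F m u v d ↔ (s ∈ (indepCpx F).faces ∧ s.card = d) ∧ IsLo F m u v s := by
  simp [loD, facesD]

section WithHyp2

variable (h1 : ∀ i < m, ∀ w, F.Adj (v i) w → w = u i ∨ ∃ l < i, (w = u l ∨ F.Adj (u l) w))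
variable (h2 : ∀ i < m, ∀ l < i, ¬F.Adj (v i) (u l) ∧ v i ≠ u l ∧ u i ≠ u l)
variable (h5 : ∀ i < m, v i = u i → i + 1 = m)
variable (hend : (∀ x : V, ∃ l < m, x = u l ∨ F.Adj (u l) x) ∨ (0 < m ∧ v (m - 1) = u (m - 1)))

include h1 h2 h5 in
lemma rank_bound (d : ℕ) :
    (loD F m u v d).card ≤ Module.finrank ℚ (LinearMap.range (delta (indepCpx F) d)) := by
  classical
  set K := indepCpx F with hK
  let e : ({x : {s : Finset V // s ∈ K.faces ∧ s.card = d} // IsLo F m u v x.1} → ℚ) →ₗ[ℚ]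
      cochain K d :=
    { toFun := fun g x => if h : IsLo F m u v x.1 then g ⟨x, h⟩ else 0
      map_add' := by intro g g'; funext x; by_cases h : IsLo F m u v x.1 <;> simp [h]
      map_smul' := by intro c g; funext x; by_cases h : IsLo F m u v x.1 <;> simp [h] }
  have heval : ∀ g (x : {s : Finset V // s ∈ K.faces ∧ s.card = d}) (h : IsLo F m u v x.1),
      e g x = g ⟨x, h⟩ := fun g x h => dif_pos h
  have hzero : ∀ g (x : {s : Finset V // s ∈ K.faces ∧ s.card = d}), ¬IsLo F m u v x.1 →
      e g x = 0 := fun g x h => dif_neg h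
  have hinj : ∀ g, delta K d (e g) = 0 → g = 0 := by
    intro g hg
    by_contra hgne
    have hex : ∃ x, g x ≠ 0 := by
      by_contra hcon; push_neg at hcon; exact hgne (funext hcon)
    obtain ⟨x0, hx0⟩ := hex
    set M := (univ.filter (fun x : {s : Finset V // s ∈ K.faces ∧ s.card = d} =>
      e g x ≠ 0)).image (fun x => lev m u x.1) with hM
    have hx0supp : e g x0.1 ≠ 0 := by
      rw [heval g x0.1 x0.2]; exact hx0
    have hMne : M.Nonempty :=
      ⟨lev m u x0.1.1, Finset.mem_image.2 ⟨x0.1,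
        Finset.mem_filter.2 ⟨Finset.mem_univ _, hx0supp⟩, rfl⟩⟩
    set i := M.min' hMne with hidef
    obtain ⟨σ₀, hσ₀supp, hσ₀lev⟩ :
        ∃ σ₀ : {s : Finset V // s ∈ K.faces ∧ s.card = d},
          e g σ₀ ≠ 0 ∧ lev m u σ₀.1 = i := by
      obtain ⟨x, hx, hxe⟩ := Finset.mem_image.1
        (show M.min' hMne ∈ (univ.filter (fun x : {s : Finset V // s ∈ K.faces ∧ s.card = d} =>
          e g x ≠ 0)).image (fun x => lev m u x.1) from Finset.min'_mem M hMne)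
      exact ⟨x, (Finset.mem_filter.1 hx).2, hxe⟩
    have hmin : ∀ x : {s : Finset V // s ∈ K.faces ∧ s.card = d},
        e g x ≠ 0 → i ≤ lev m u x.1 := by
      intro x hx
      exact Finset.min'_le M _ (Finset.mem_image.2 ⟨x,
        Finset.mem_filter.2 ⟨Finset.mem_univ _, hx⟩, rfl⟩)
    have hLo : IsLo F m u v σ₀.1 := by
      by_contra hc; exact hσ₀supp (hzero g σ₀ hc)
    have hlt : i < m := hσ₀lev ▸ hLo.2.1
    have hvnot : v i ∉ σ₀.1 := hσ₀lev ▸ hLo.2.2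
    set c := insert (v i) σ₀.1 with hcdef
    have hcface : c ∈ K.faces := by
      have := insert_face h1 h2 σ₀.1 hLo
      rwa [hσ₀lev] at this
    have hccard : c.card = d + 1 := by
      rw [hcdef, Finset.card_insert_of_notMem hvnot, σ₀.2.2]
    have hzero' := congrFun hg (⟨c, hcface, hccard⟩ : {s : Finset V // s ∈ K.faces ∧ s.card = d + 1})
    rw [delta_apply K d (e g) ⟨c, hcface, hccard⟩] at hzero'
    have hmain : (∑ x ∈ c, sgn c x * extc (e g) (c.erase x))
        = sgn c (v i) * extc (e g) (c.erase (v i)) := by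
      refine Finset.sum_eq_single_of_mem (v i) (Finset.mem_insert_self _ _) ?_
      intro b hbmem hbne
      have hbσ : b ∈ σ₀.1 := by
        rcases Finset.mem_insert.1 hbmem with h | h
        · exact absurd h hbne
        · exact h
      rcases em ((c.erase b) ∈ K.faces ∧ (c.erase b).card = d) with hρ | hρ
      · rw [extc_apply _ _ hρ]
        have hegz : e g ⟨c.erase b, hρ⟩ = 0 := by
          by_contra hne0
          have hIsLo : IsLo F m u v (c.erase b) := by
            by_contra hcon
            exact hne0 (hzero g ⟨c.erase b, hρ⟩ hcon)
          have hge := hmin _ hne0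
          have halt := erase_insert_not_lo h2 h5 σ₀.1 (hσ₀lev ▸ hLo.2.1) (hσ₀lev ▸ hLo.2.2) b hbσ
          rw [hσ₀lev] at halt
          rcases halt with hA | hB
          · exact hA hIsLo
          · have hBc : lev m u (c.erase b) < i := hB
            have hge' : i ≤ lev m u (c.erase b) := hge
            omega
        rw [hegz, mul_zero]
      · rw [extc_zero _ _ hρ, mul_zero]
    rw [hmain, Finset.erase_insert hvnot, extc_apply _ _ σ₀.2] at hzero'
    have : e g ⟨σ₀.1, σ₀.2⟩ = 0 := by
      have hsz := sgn_ne_zero c (v i)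
      simp only [Pi.zero_apply] at hzero'
      exact (mul_eq_zero.1 hzero').resolve_left hsz
    exact hσ₀supp this
  have hinj' : Function.Injective ((delta K d).comp e) := by
    rw [← LinearMap.ker_eq_bot]
    apply LinearMap.ker_eq_bot'.2
    intro g hgg
    exact hinj g (by simpa using hgg)
  have hrk : Module.finrank ℚ (LinearMap.range ((delta K d).comp e))
      = Fintype.card {x : {s : Finset V // s ∈ K.faces ∧ s.card = d} // IsLo F m u v x.1} := by
    rw [LinearMap.finrank_range_of_inj hinj', Module.finrank_fintype_fun_eq_card]
  have hcard : Fintype.card {x : {s : Finset V // s ∈ K.faces ∧ s.card = d} // IsLo F m u v x.1}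
      = (loD F m u v d).card := by
    rw [← Fintype.card_coe (loD F m u v d)]
    refine Fintype.card_congr
      { toFun := fun x => ⟨x.1.1, (mem_loD_iff x.1.1).2 ⟨x.1.2, x.2⟩⟩
        invFun := fun y => ⟨⟨y.1, ((mem_loD_iff y.1).1 y.2).1⟩, ((mem_loD_iff y.1).1 y.2).2⟩
        left_inv := fun x => rfl
        right_inv := fun y => rfl }
  have hle : LinearMap.range ((delta K d).comp e) ≤ LinearMap.range (delta K d) :=
    LinearMap.range_comp_le_range _ _
  have := Submodule.finrank_mono hle
  omega

omit h1 h5 in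
include h2 in
lemma psi_spec1 (c : Finset V) (hcface : c ∈ (indepCpx F).faces) (hnIs : ¬ IsLo F m u v c)
    (hlt : lev m u c < m) :
    v (lev m u c) ∈ c ∧ lev m u (c.erase (v (lev m u c))) = lev m u c ∧
      IsLo F m u v (c.erase (v (lev m u c))) := by
  have hvmem : v (lev m u c) ∈ c := by
    by_contra h
    exact hnIs ⟨hcface, hlt, h⟩
  have hlev : lev m u (c.erase (v (lev m u c))) = lev m u c := by
    refine lev_eq m u _ _ (le_of_lt hlt) ?_ ?_
    · intro l hl
      exact Finset.mem_erase.2 ⟨Ne.symm (h2 (lev m u c) hlt l hl).2.1, u_mem_of_lt_lev m u c hl⟩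
    · intro _ hmem
      exact u_not_mem_lev m u c hlt (Finset.mem_of_mem_erase hmem)
  refine ⟨hvmem, hlev, ?_, ?_, ?_⟩
  · exact (indepCpx F).down _ _ (Finset.erase_subset _ _) hcface
  · rw [hlev]; exact hlt
  · rw [hlev]; exact Finset.notMem_erase _ _

omit h1 h5 in
include h2 in
lemma psi_spec2 (c : Finset V) (hcface : c ∈ (indepCpx F).faces) (hlevm : lev m u c = m)
    (hm0 : 0 < m) (hvueq : v (m - 1) = u (m - 1)) :
    u (m - 1) ∈ c ∧ lev m u (c.erase (u (m - 1))) = m - 1 ∧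
      IsLo F m u v (c.erase (u (m - 1))) := by
  have humem : u (m - 1) ∈ c := u_mem_of_lt_lev m u c (by omega)
  have hlev : lev m u (c.erase (u (m - 1))) = m - 1 := by
    refine lev_eq m u _ _ (by omega) ?_ ?_
    · intro l hl
      refine Finset.mem_erase.2 ⟨Ne.symm ((h2 (m - 1) (by omega) l (by omega)).2.2), ?_⟩
      exact u_mem_of_lt_lev m u c (by omega)
    · intro _
      exact Finset.notMem_erase _ _
  refine ⟨humem, hlev, ?_, ?_, ?_⟩
  · exact (indepCpx F).down _ _ (Finset.erase_subset _ _) hcface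
  · rw [hlev]; omega
  · rw [hlev, hvueq]; exact Finset.notMem_erase _ _

omit h1 h5 in
include h2 hend in
lemma conekill (c : Finset V) (hcface : c ∈ (indepCpx F).faces)
    (hcu : c ≠ (range m).image u) (hge : ¬ lev m u c < m) :
    0 < m ∧ v (m - 1) = u (m - 1) := by
  rcases hend with hs | hcone
  · exfalso
    apply hcu
    have hlevm : lev m u c = m := le_antisymm (lev_le m u c) (not_lt.1 hge)
    apply Finset.Subset.antisymm
    · intro x hx
      obtain ⟨l, hl, hx'⟩ := hs x
      rcases hx' with rfl | hadj
      · exact Finset.mem_image.2 ⟨l, Finset.mem_range.2 hl, rfl⟩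
      · exfalso
        have hul : u l ∈ c := u_mem_of_lt_lev m u c (by omega)
        exact hcface (u l) hul x hx hadj
    · intro x hx
      obtain ⟨l, hl, rfl⟩ := Finset.mem_image.1 hx
      have := Finset.mem_range.1 hl
      exact u_mem_of_lt_lev m u c (by omega)
  · exact hcone

omit h1 h5 in
include h2 hend in
lemma count_bound :
    (allF (indepCpx F)).card ≤
      2 * ((allF (indepCpx F)).filter (IsLo F m u v)).card + 1 := by
  classical
  set uS := (range m).image u with huS
  set LoFin := (allF (indepCpx F)).filter (IsLo F m u v) with hLoFin
  set T := (allF (indepCpx F)).filter (fun c => ¬ IsLo F m u v c ∧ c ≠ uS) with hT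
  have hfaces : ∀ c ∈ allF (indepCpx F), c ∈ (indepCpx F).faces := by
    intro c hc
    exact (Finset.mem_filter.1 hc).2
  have hsub : allF (indepCpx F) ⊆ LoFin ∪ T ∪ {uS} := by
    intro c hc
    by_cases hIs : IsLo F m u v c
    · exact Finset.mem_union_left _ (Finset.mem_union_left _ (Finset.mem_filter.2 ⟨hc, hIs⟩))
    · by_cases hcu : c = uS
      · exact Finset.mem_union_right _ (by simp [hcu])
      · exact Finset.mem_union_left _ (Finset.mem_union_right _
          (Finset.mem_filter.2 ⟨hc, hIs, hcu⟩))
  have hc1 : (allF (indepCpx F)).card ≤ LoFin.card + T.card + 1 := by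
    have := Finset.card_le_card hsub
    have h2' := Finset.card_union_le (LoFin ∪ T) {uS}
    have h3' := Finset.card_union_le LoFin T
    have h4' : ({uS} : Finset (Finset V)).card = 1 := Finset.card_singleton _
    omega
  have hTbound : T.card ≤ LoFin.card := by
    apply Finset.card_le_card_of_injOn
      (fun c => if lev m u c < m then c.erase (v (lev m u c)) else c.erase (u (m - 1)))
    · intro c hc
      obtain ⟨hcall, hnIs, hcu⟩ := Finset.mem_filter.1 hc
      have hcface := hfaces c hcall
      by_cases hlt : lev m u c < m
      · obtain ⟨hvmem, hlev, hIsLo⟩ := psi_spec1 h2 c hcface hnIs hlt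
        beta_reduce
        rw [if_pos hlt]
        refine Finset.mem_filter.2 ⟨?_, hIsLo⟩
        simp only [allF, Finset.mem_filter, Finset.mem_univ, true_and]
        exact (indepCpx F).down _ _ (Finset.erase_subset _ _) hcface
      · obtain ⟨hm0, hvueq⟩ := conekill h2 hend c hcface hcu hlt
        have hlevm : lev m u c = m := le_antisymm (lev_le m u c) (not_lt.1 hlt)
        obtain ⟨humem, hlev, hIsLo⟩ := psi_spec2 h2 c hcface hlevm hm0 hvueq
        beta_reduce
        rw [if_neg hlt]
        refine Finset.mem_filter.2 ⟨?_, hIsLo⟩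
        simp only [allF, Finset.mem_filter, Finset.mem_univ, true_and]
        exact (indepCpx F).down _ _ (Finset.erase_subset _ _) hcface
    · intro c hc c' hc' heq
      obtain ⟨hcall, hnIs, hcu⟩ := Finset.mem_filter.1 hc
      obtain ⟨hcall', hnIs', hcu'⟩ := Finset.mem_filter.1 hc'
      have hcface := hfaces c hcall
      have hcface' := hfaces c' hcall'
      simp only at heq
      by_cases hlt : lev m u c < m <;> by_cases hlt' : lev m u c' < m
      · obtain ⟨hvmem, hlev, _⟩ := psi_spec1 h2 c hcface hnIs hlt
        obtain ⟨hvmem', hlev', _⟩ := psi_spec1 h2 c' hcface' hnIs' hlt'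
        rw [if_pos hlt, if_pos hlt'] at heq
        have hleveq : lev m u c = lev m u c' := by
          rw [← hlev, ← hlev', heq]
        rw [← Finset.insert_erase hvmem, ← Finset.insert_erase hvmem', heq, hleveq]
      · exfalso
        obtain ⟨hm0, hvueq⟩ := conekill h2 hend c' hcface' hcu' hlt'
        obtain ⟨hvmem, hlev, _⟩ := psi_spec1 h2 c hcface hnIs hlt
        have hlevm' : lev m u c' = m := le_antisymm (lev_le m u c') (not_lt.1 hlt')
        obtain ⟨humem', hlev', _⟩ := psi_spec2 h2 c' hcface' hlevm' hm0 hvueq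
        rw [if_pos hlt, if_neg hlt'] at heq
        have hlc : lev m u c = m - 1 := by rw [← hlev, heq, hlev']
        rw [hlc, hvueq] at hvmem
        have hnm := u_not_mem_lev m u c hlt
        rw [hlc] at hnm
        exact hnm hvmem
      · exfalso
        obtain ⟨hm0, hvueq⟩ := conekill h2 hend c hcface hcu hlt
        obtain ⟨hvmem', hlev', _⟩ := psi_spec1 h2 c' hcface' hnIs' hlt'
        have hlevm : lev m u c = m := le_antisymm (lev_le m u c) (not_lt.1 hlt)
        obtain ⟨humem, hlev, _⟩ := psi_spec2 h2 c hcface hlevm hm0 hvueq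
        rw [if_neg hlt, if_pos hlt'] at heq
        have hlc : lev m u c' = m - 1 := by rw [← hlev', ← heq, hlev]
        rw [hlc, hvueq] at hvmem'
        have hnm := u_not_mem_lev m u c' hlt'
        rw [hlc] at hnm
        exact hnm hvmem'
      · obtain ⟨hm0, hvueq⟩ := conekill h2 hend c hcface hcu hlt
        have hlevm : lev m u c = m := le_antisymm (lev_le m u c) (not_lt.1 hlt)
        have hlevm' : lev m u c' = m := le_antisymm (lev_le m u c') (not_lt.1 hlt')
        obtain ⟨humem, hlev, _⟩ := psi_spec2 h2 c hcface hlevm hm0 hvueq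
        obtain ⟨humem', hlev', _⟩ := psi_spec2 h2 c' hcface' hlevm' hm0 hvueq
        rw [if_neg hlt, if_neg hlt'] at heq
        rw [← Finset.insert_erase humem, ← Finset.insert_erase humem', heq]
  omega

end WithHyp2

end Matching

-- ===== graph theory: finding leaves =====

section GraphTheory

variable (F : SimpleGraph V)

lemma walk_of_chain : ∀ (l : List V) (a : V), List.Chain F.Adj a l → (a :: l).Nodup →
    ∀ w ∈ l, ∃ p : F.Walk a w, p.IsPath ∧ (∀ x ∈ p.support, x ∈ a :: l) ∧
      1 ≤ p.length ∧ (w ∈ l.tail → 2 ≤ p.length) := by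
  intro l
  induction l with
  | nil => intro a _ _ w hw; exact absurd hw List.not_mem_nil
  | cons b t ih =>
    intro a hchain hnodup w hw
    have hab : F.Adj a b := (List.chain_cons.1 hchain).1
    have hchaint : List.Chain F.Adj b t := (List.chain_cons.1 hchain).2
    rcases List.mem_cons.1 hw with rfl | hwt
    · refine ⟨SimpleGraph.Walk.cons hab SimpleGraph.Walk.nil,
        (SimpleGraph.Path.singleton hab).2, ?_, ?_, ?_⟩
      · intro x hx
        simp only [SimpleGraph.Walk.support_cons, SimpleGraph.Walk.support_nil] at hx
        rcases List.mem_cons.1 hx with rfl | hx'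
        · exact List.mem_cons_self
        · simp only [List.mem_singleton] at hx'
          exact hx' ▸ List.mem_cons_of_mem _ (List.mem_cons_self)
      · simp
      · intro hmem
        simp only [List.tail_cons] at hmem
        have : w ∉ t := (List.nodup_cons.1 (List.Nodup.of_cons hnodup)).1
        exact absurd hmem this
    · have hnodup' : (b :: t).Nodup := List.Nodup.of_cons hnodup
      obtain ⟨p', hp', hsupp', hlen', _⟩ := ih b hchaint hnodup' w hwt
      have hanotin : a ∉ p'.support := by
        intro ha
        exact (List.nodup_cons.1 hnodup).1 (hsupp' a ha)
      refine ⟨SimpleGraph.Walk.cons hab p', ?_, ?_, ?_, ?_⟩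
      · rw [SimpleGraph.Walk.cons_isPath_iff]
        exact ⟨hp', hanotin⟩
      · intro x hx
        rw [SimpleGraph.Walk.support_cons] at hx
        rcases List.mem_cons.1 hx with rfl | hx'
        · exact List.mem_cons_self
        · exact List.mem_cons_of_mem _ (hsupp' x hx')
      · simp [SimpleGraph.Walk.length_cons]
      · intro _
        rw [SimpleGraph.Walk.length_cons]
        omega

lemma exists_leaf (hF : F.IsAcyclic) (W : Finset V) (x0 y0 : V) (hx0 : x0 ∈ W)
    (hy0 : y0 ∈ W) (hadj : F.Adj x0 y0) :
    ∃ a ∈ W, ∃ b ∈ W, F.Adj a b ∧ ∀ w ∈ W, F.Adj a w → w = b := by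
  classical
  set S : Set (V × List V) := {p | p.2 ≠ [] ∧ List.Chain F.Adj p.1 p.2 ∧
    (p.1 :: p.2).Nodup ∧ ∀ x ∈ p.1 :: p.2, x ∈ W} with hS
  have hfin : S.Finite := by
    apply Set.Finite.subset ((Set.finite_univ (α := V)).prod
      (List.finite_length_le V (Fintype.card V)))
    intro p hp
    refine ⟨Set.mem_univ _, ?_⟩
    have : p.2.Nodup := (List.nodup_cons.1 hp.2.2.1).2
    exact this.length_le_card
  have hne : S.Nonempty := by
    refine ⟨(x0, [y0]), ?_, ?_, ?_, ?_⟩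
    · simp
    · exact List.chain_cons.2 ⟨hadj, List.Chain.nil⟩
    · simp [hadj.ne]
    · intro x hx
      rcases List.mem_cons.1 hx with rfl | hx'
      · exact hx0
      · simp only [List.mem_singleton] at hx'
        exact hx' ▸ hy0
  obtain ⟨⟨a, l⟩, hmem, hmax⟩ := Set.Finite.exists_maximalFor (fun p => p.2.length) S hfin hne
  obtain ⟨hlne, hchain, hnodup, hmemW⟩ := hmem
  obtain ⟨b, t, rfl⟩ : ∃ b t, l = b :: t := by
    cases l with
    | nil => exact absurd rfl hlne
    | cons b t => exact ⟨b, t, rfl⟩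
  have hab : F.Adj a b := (List.chain_cons.1 hchain).1
  refine ⟨a, hmemW a (List.mem_cons_self), b,
    hmemW b (List.mem_cons_of_mem _ (List.mem_cons_self)), hab, ?_⟩
  intro w hw hadjw
  by_contra hwb
  by_cases hnin : w ∈ a :: b :: t
  · -- w is somewhere in the path; build a cycle contradiction
    have hwa : w ≠ a := fun h => F.irrefl (h ▸ hadjw)
    have hwt : w ∈ t := by
      rcases List.mem_cons.1 hnin with h | h
      · exact absurd h hwa
      · rcases List.mem_cons.1 h with h' | h'
        · exact absurd h' hwb
        · exact h'
    obtain ⟨p, hp, _, _, hlen2⟩ := walk_of_chain F (b :: t) a hchain hnodup w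
      (List.mem_cons_of_mem _ hwt)
    have hlen : 2 ≤ p.length := hlen2 (by simpa using hwt)
    have hq : (SimpleGraph.Walk.cons hadjw SimpleGraph.Walk.nil).IsPath :=
      (SimpleGraph.Path.singleton hadjw).2
    have hPQ := SimpleGraph.isAcyclic_iff_path_unique.1 hF ⟨p, hp⟩ ⟨_, hq⟩
    have : p = SimpleGraph.Walk.cons hadjw SimpleGraph.Walk.nil := Subtype.ext_iff.1 hPQ
    rw [this] at hlen
    simp [SimpleGraph.Walk.length_cons] at hlen
  · -- extend the path: contradiction with maximality
    have hS' : (w, a :: b :: t) ∈ S := by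
      refine ⟨by simp, ?_, ?_, ?_⟩
      · exact List.chain_cons.2 ⟨hadjw.symm, hchain⟩
      · exact List.nodup_cons.2 ⟨hnin, hnodup⟩
      · intro x hx
        rcases List.mem_cons.1 hx with rfl | hx'
        · exact hw
        · exact hmemW x hx'
    have := hmax hS' (by simp)
    simp at this

end GraphTheory

-- ===== sum of loD =====

lemma sum_loD (F : SimpleGraph V) (m : ℕ) (u v : ℕ → V) :
    ∑ d ∈ range (Fintype.card V + 1), (loD F m u v d).card
      = ((allF (indepCpx F)).filter (IsLo F m u v)).card := by
  classical
  rw [Finset.card_eq_sum_card_fiberwise (f := fun s : Finset V => s.card)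
    (t := range (Fintype.card V + 1)) (fun x _ => by
      simp only [Finset.mem_coe, Finset.mem_range]
      have := Finset.card_le_univ x
      omega)]
  refine Finset.sum_congr rfl fun d _ => ?_
  congr 1
  ext s
  simp only [loD, facesD, allF, Finset.mem_filter, Finset.mem_univ, true_and]
  tauto

-- ===== Good sequences =====

section GoodSeq

variable (F : SimpleGraph V)

noncomputable def Good : List (V × V) → Finset V → Prop
  | [], W => W = ∅
  | (p :: rest), W => p.1 ∈ W ∧ p.2 ∈ W ∧ (∀ w ∈ W, F.Adj p.2 w → w = p.1) ∧
      ((p.2 = p.1 ∧ rest = []) ∨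
        (p.2 ≠ p.1 ∧ Good rest (W.filter (fun x => x ≠ p.1 ∧ ¬ F.Adj p.1 x))))

lemma exists_good (hF : F.IsAcyclic) : ∀ n (W : Finset V), W.card ≤ n →
    ∃ ps, Good F ps W := by
  intro n
  induction n with
  | zero =>
    intro W hW
    exact ⟨[], Finset.card_eq_zero.1 (Nat.le_zero.1 hW)⟩
  | succ n ih =>
    intro W hW
    by_cases hW0 : W = ∅
    · exact ⟨[], hW0⟩
    · obtain ⟨x0, hx0⟩ := Finset.nonempty_of_ne_empty hW0
      by_cases hiso : ∃ z ∈ W, ∀ w ∈ W, ¬ F.Adj z w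
      · obtain ⟨z, hz, hzno⟩ := hiso
        exact ⟨[(z, z)], hz, hz, fun w hw ha => absurd ha (hzno w hw), Or.inl ⟨rfl, rfl⟩⟩
      · push_neg at hiso
        obtain ⟨y0, hy0, hadj0⟩ := hiso x0 hx0
        obtain ⟨a, ha, b, hb, hab, hleaf⟩ := exists_leaf F hF W x0 y0 hx0 hy0 hadj0
        set W' := W.filter (fun x => x ≠ b ∧ ¬ F.Adj b x) with hW'
        have hbnot : b ∉ W' := by simp [hW']
        have hsub : W' ⊆ W := Finset.filter_subset _ _
        have hlt : W'.card < W.card := Finset.card_lt_card ⟨hsub, fun hc => hbnot (hc hb)⟩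
        obtain ⟨ps, hps⟩ := ih W' (by omega)
        refine ⟨[(b, a)] ++ ps, hb, ha, ?_, Or.inr ⟨hab.ne, hps⟩⟩
        intro w hw hadjw
        exact hleaf w hw hadjw

lemma good_props (d0 : V × V) : ∀ (ps : List (V × V)) (W : Finset V), Good F ps W →
    ∀ i, i < ps.length →
      (ps.getD i d0).1 ∈ W ∧ (ps.getD i d0).2 ∈ W ∧
      (∀ l < i, (ps.getD i d0).1 ≠ (ps.getD l d0).1 ∧ (ps.getD i d0).2 ≠ (ps.getD l d0).1 ∧
         ¬F.Adj (ps.getD l d0).1 (ps.getD i d0).1 ∧ ¬F.Adj (ps.getD l d0).1 (ps.getD i d0).2) ∧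
      (∀ w ∈ W, F.Adj (ps.getD i d0).2 w →
        (∀ l < i, w ≠ (ps.getD l d0).1 ∧ ¬F.Adj (ps.getD l d0).1 w) → w = (ps.getD i d0).1) ∧
      ((ps.getD i d0).2 = (ps.getD i d0).1 → i + 1 = ps.length) := by
  intro ps
  induction ps with
  | nil => intro W _ i hi; simp at hi
  | cons p rest ih =>
    intro W hg i hi
    obtain ⟨hu, hv, hleaf, hbranch⟩ := hg
    cases i with
    | zero =>
      refine ⟨hu, hv, by omega, ?_, ?_⟩
      · intro w hw hadj _
        exact hleaf w hw hadj
      · intro heq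
        rcases hbranch with ⟨_, hrest⟩ | ⟨hne, _⟩
        · simp [hrest]
        · exact absurd heq hne
    | succ j =>
      rcases hbranch with ⟨_, hrest⟩ | ⟨hne, hgood'⟩
      · subst hrest
        simp at hi
      · have hj : j < rest.length := by simpa using hi
        obtain ⟨hu', hv', hprev, hleaf', h5'⟩ := ih _ hgood' j hj
        have hgetD : ∀ k, ((p :: rest).getD (k + 1) d0) = rest.getD k d0 := by
          intro k; rfl
        have huW' : (rest.getD j d0).1 ∈ W.filter (fun x => x ≠ p.1 ∧ ¬ F.Adj p.1 x) := hu'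
        have hvW' : (rest.getD j d0).2 ∈ W.filter (fun x => x ≠ p.1 ∧ ¬ F.Adj p.1 x) := hv'
        rw [Finset.mem_filter] at huW' hvW'
        refine ⟨?_, ?_, ?_, ?_, ?_⟩
        · rw [hgetD]; exact huW'.1
        · rw [hgetD]; exact hvW'.1
        · intro l hl
          cases l with
          | zero =>
            rw [hgetD]
            exact ⟨huW'.2.1, hvW'.2.1, huW'.2.2, hvW'.2.2⟩
          | succ k =>
            rw [hgetD, hgetD]
            exact hprev k (by omega)
        · intro w hw hadj hcond
          rw [hgetD]
          rw [hgetD] at hadj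
          refine hleaf' w (Finset.mem_filter.2 ⟨hw, (hcond 0 (by omega)).1, (hcond 0 (by omega)).2⟩)
            hadj ?_
          intro l hl
          have := hcond (l + 1) (by omega)
          rw [hgetD] at this
          exact this
        · rw [hgetD]
          intro heq
          have := h5' heq
          simp only [List.length_cons]
          omega

lemma good_end (d0 : V × V) : ∀ (ps : List (V × V)) (W : Finset V), Good F ps W →
    (∃ i, i + 1 = ps.length ∧ (ps.getD i d0).2 = (ps.getD i d0).1) ∨
    (∀ x ∈ W, ∃ l < ps.length, x = (ps.getD l d0).1 ∨ F.Adj (ps.getD l d0).1 x) := by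
  intro ps
  induction ps with
  | nil =>
    intro W hg
    right
    intro x hx
    rw [hg] at hx
    exact absurd hx (Finset.notMem_empty x)
  | cons p rest ih =>
    intro W hg
    obtain ⟨hu, hv, hleaf, hbranch⟩ := hg
    rcases hbranch with ⟨heq, hrest⟩ | ⟨hne, hgood'⟩
    · left
      exact ⟨0, by simp [hrest], heq⟩
    · rcases ih _ hgood' with ⟨i, hi, heq⟩ | hall
      · left
        refine ⟨i + 1, by simp only [List.length_cons]; omega, heq⟩
      · right
        intro x hx
        by_cases hx' : x ∈ W.filter (fun y => y ≠ p.1 ∧ ¬ F.Adj p.1 y)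
        · obtain ⟨l, hl, hcase⟩ := hall x hx'
          exact ⟨l + 1, by simpa using Nat.succ_lt_succ hl, hcase⟩
        · rw [Finset.mem_filter] at hx'
          push_neg at hx'
          rcases em (x = p.1) with h | h
          · exact ⟨0, by simp, Or.inl h⟩
          · exact ⟨0, by simp, Or.inr (hx' hx h)⟩

end GoodSeq

-- ===== main theorem =====

theorem stmt6' (F : SimpleGraph V) (hF : F.IsAcyclic) :
    (∀ r : ℤ, reducedBetti (indepCpx F) r = 0) ∨
    (∃ k : ℤ, reducedBetti (indepCpx F) k = 1 ∧
      ∀ r : ℤ, r ≠ k → reducedBetti (indepCpx F) r = 0) := by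
  classical
  have htot : ∑ d ∈ range (Fintype.card V + 2),
      Module.finrank ℚ (Hq (indepCpx F) d) ≤ 1 := by
    rcases isEmpty_or_nonempty V with hemp | hnemp
    · have hb := total_bound (indepCpx F) (fun _ => 0) (fun d => Nat.zero_le _)
      have hA : (allF (indepCpx F)).card ≤ 1 := by
        have hc1 := Finset.card_filter_le (univ : Finset (Finset V))
          (fun s => s ∈ (indepCpx F).faces)
        have hc2 : (univ : Finset (Finset V)).card = 1 := by
          rw [Finset.card_univ, Fintype.card_finset, Fintype.card_eq_zero]
          norm_num
        have : (allF (indepCpx F)).card ≤ (univ : Finset (Finset V)).card := hc1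
        omega
      have hz : (2 : ℕ) * ∑ _d ∈ range (Fintype.card V + 1), (0 : ℕ) = 0 := by
        simp
      omega
    · obtain ⟨ps, hgood⟩ := exists_good F hF (univ : Finset V).card univ le_rfl
      set d0 : V × V := (Classical.arbitrary V, Classical.arbitrary V) with hd0
      set m := ps.length with hm
      set u : ℕ → V := fun i => (ps.getD i d0).1 with hu
      set v : ℕ → V := fun i => (ps.getD i d0).2 with hv
      have hprops := good_props F d0 ps univ hgood
      have hendp := good_end F d0 ps univ hgood
      have h1 : ∀ i < m, ∀ w, F.Adj (v i) w → w = u i ∨ ∃ l < i, (w = u l ∨ F.Adj (u l) w) := by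
        intro i hi w hadj
        by_cases hall : ∀ l < i, w ≠ u l ∧ ¬F.Adj (u l) w
        · left
          exact (hprops i hi).2.2.2.1 w (Finset.mem_univ w) hadj hall
        · right
          push_neg at hall
          obtain ⟨l, hl, hcase⟩ := hall
          refine ⟨l, hl, ?_⟩
          rcases em (w = u l) with hC | hC
          · exact Or.inl hC
          · exact Or.inr (hcase hC)
      have h2 : ∀ i < m, ∀ l < i, ¬F.Adj (v i) (u l) ∧ v i ≠ u l ∧ u i ≠ u l := by
        intro i hi l hl
        obtain ⟨_, _, hprev, _, _⟩ := hprops i hi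
        obtain ⟨hune, hvne, _hadju, hadjv⟩ := hprev l hl
        exact ⟨fun h => hadjv h.symm, hvne, hune⟩
      have h5 : ∀ i < m, v i = u i → i + 1 = m := fun i hi => (hprops i hi).2.2.2.2
      have hend : (∀ x : V, ∃ l < m, x = u l ∨ F.Adj (u l) x) ∨
          (0 < m ∧ v (m - 1) = u (m - 1)) := by
        rcases hendp with ⟨i, hi, heq⟩ | hall
        · right
          have hm0 : 0 < m := by omega
          have hieq : i = m - 1 := by omega
          subst hieq
          exact ⟨hm0, heq⟩
        · left
          intro x
          exact hall x (Finset.mem_univ x)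
      have hrank := fun d => rank_bound h1 h2 h5 d
      have hcount := count_bound h2 hend
      have hsum := sum_loD F m u v
      have htotal := total_bound (indepCpx F) (fun d => (loD F m u v d).card) hrank
      have hbeta : ∑ d ∈ range (Fintype.card V + 1), (fun d => (loD F m u v d).card) d
          = ∑ d ∈ range (Fintype.card V + 1), (loD F m u v d).card := rfl
      omega
  by_cases hall : ∀ r : ℤ, reducedBetti (indepCpx F) r = 0
  · exact Or.inl hall
  · right
    push_neg at hall
    obtain ⟨r₀, hr₀⟩ := hall
    have hb : ∀ r : ℤ, ¬ r < -1 →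
        reducedBetti (indepCpx F) r = Module.finrank ℚ (Hq (indepCpx F) (r + 1).toNat) := by
      intro r hr
      rw [reducedBetti, if_neg hr]
    have hr₀ge : ¬ r₀ < -1 := by
      intro h
      exact hr₀ (by rw [reducedBetti, if_pos h])
    have hfr : Module.finrank ℚ (Hq (indepCpx F) (r₀ + 1).toNat) ≠ 0 := by
      rw [← hb r₀ hr₀ge]
      exact hr₀
    have hdle : (r₀ + 1).toNat < Fintype.card V + 2 := by
      by_contra hcon
      exact hfr (hq_vanish (indepCpx F) _ (by omega))
    have hone : Module.finrank ℚ (Hq (indepCpx F) (r₀ + 1).toNat) = 1 := by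
      have hle := Finset.single_le_sum (f := fun d => Module.finrank ℚ (Hq (indepCpx F) d))
        (fun d _ => Nat.zero_le _) (Finset.mem_range.2 hdle)
      have hb1 : ∑ x ∈ range (Fintype.card V + 2),
          (fun d => Module.finrank ℚ (Hq (indepCpx F) d)) x
          = ∑ d ∈ range (Fintype.card V + 2), Module.finrank ℚ (Hq (indepCpx F) d) := rfl
      have hb2 : (fun d => Module.finrank ℚ (Hq (indepCpx F) d)) (r₀ + 1).toNat
          = Module.finrank ℚ (Hq (indepCpx F) (r₀ + 1).toNat) := rfl
      omega
    have hother : ∀ d, d < Fintype.card V + 2 → d ≠ (r₀ + 1).toNat →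
        Module.finrank ℚ (Hq (indepCpx F) d) = 0 := by
      intro d hd hne
      have hsub : ({d, (r₀ + 1).toNat} : Finset ℕ) ⊆ range (Fintype.card V + 2) := by
        intro x hx
        simp only [Finset.mem_insert, Finset.mem_singleton] at hx
        rcases hx with rfl | rfl
        · exact Finset.mem_range.2 hd
        · exact Finset.mem_range.2 hdle
      have hpair : ∑ x ∈ ({d, (r₀ + 1).toNat} : Finset ℕ),
          Module.finrank ℚ (Hq (indepCpx F) x)
          = Module.finrank ℚ (Hq (indepCpx F) d)
            + Module.finrank ℚ (Hq (indepCpx F) (r₀ + 1).toNat) := Finset.sum_pair hne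
      have hmono := Finset.sum_le_sum_of_subset
        (f := fun d => Module.finrank ℚ (Hq (indepCpx F) d)) hsub
      have hb1 : ∑ x ∈ range (Fintype.card V + 2),
          (fun d => Module.finrank ℚ (Hq (indepCpx F) d)) x
          = ∑ d ∈ range (Fintype.card V + 2), Module.finrank ℚ (Hq (indepCpx F) d) := rfl
      have hb2 : ∑ x ∈ ({d, (r₀ + 1).toNat} : Finset ℕ),
          (fun d => Module.finrank ℚ (Hq (indepCpx F) d)) x
          = ∑ x ∈ ({d, (r₀ + 1).toNat} : Finset ℕ),
            Module.finrank ℚ (Hq (indepCpx F) x) := rfl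
      omega
    refine ⟨r₀, by rw [hb r₀ hr₀ge]; exact hone, ?_⟩
    intro r hrne
    by_cases hrlt : r < -1
    · rw [reducedBetti, if_pos hrlt]
    · rw [hb r hrlt]
      have hne' : (r + 1).toNat ≠ (r₀ + 1).toNat := by omega
      by_cases hcase : (r + 1).toNat < Fintype.card V + 2
      · exact hother _ hcase hne'
      · exact hq_vanish (indepCpx F) _ (by omega)

/-- **Ehrenborg–Hetyei.** The independence complex of a forest is
contractible or homotopy equivalent to a sphere; in particular its total reduced
cohomology over `ℚ` either vanishes or is one-dimensional, concentrated in a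
single degree. -/
theorem stmt6 (F : SimpleGraph V) (hF : F.IsAcyclic) :
    (∀ r : ℤ, reducedBetti (indepCpx F) r = 0) ∨
    (∃ k : ℤ, reducedBetti (indepCpx F) k = 1 ∧
      ∀ r : ℤ, r ≠ k → reducedBetti (indepCpx F) r = 0) :=
  stmt6' F hF
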